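/- Let F be a field, n ≥ 2, 1 ≤ m ≤ n−1, and let r be an integer with 1 ≤ r ≤ min(m, n−m) and 2r < n, and let d ∈ F^×. Let y(Y_r(d)) denote the n×n block matrix [[0_m, 0],[Y_r(d), 0_{n−m}]]. Then y(Y_r(d)) is SL_n(F)-conjugate to the standard nilpotent representative J_{[2^r 1^{n−2r}]} of the partition [2^r 1^{n−2r}]: there exists g ∈ SL_n(F) with g · y(Y_r(d)) · g^{-1} = J_{[2^r 1^{n−2r}]}. (Since 2r < n, the last row of J_{[2^r 1^{n−2r}]} is zero, so D(d)J_{[2^r 1^{n−2r}]} = J_{[2^r 1^{n−2r}]} and the representative is independent of d.) -/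

import Mathlib

/-- The `(n−m)×m` matrix `Y_r(d)`: its only nonzero entries are on the anti-diagonal of
its top-right `r×r` block; in 1-indexed notation, `Y_r(d)_{i, m+1−i} = 1` for
`1 ≤ i ≤ r−1` and `Y_r(d)_{r, m+1−r} = d`. -/
def Ymat (F : Type*) [Field F] (n m r : ℕ) (d : F) : Matrix (Fin (n - m)) (Fin m) F :=
  fun i j =>
    if (i : ℕ) < r ∧ (j : ℕ) + (i : ℕ) + 1 = m then
      (if (i : ℕ) = r - 1 then d else 1)
    else 0

/-- The `n×n` block matrix `y(Y) = [[0_m, 0], [Y, 0_{n−m}]]` attached to an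
`(n−m)×m` matrix `Y`. -/
def yY (F : Type*) [Field F] (n m : ℕ) (Y : Matrix (Fin (n - m)) (Fin m) F) :
    Matrix (Fin n) (Fin n) F :=
  fun i j =>
    if h : m ≤ (i : ℕ) ∧ (j : ℕ) < m then
      Y ⟨(i : ℕ) - m, by have := i.isLt; omega⟩ ⟨(j : ℕ), h.2⟩
    else 0

/-- The lower-triangular "Jordan" matrix `J_p` attached to an ordered partition
`p = [p₁, p₂, …]` of `n`: block diagonal with lower Jordan blocks `J_{[pᵢ]}`. -/
def Jmat (F : Type*) [Field F] (n : ℕ) (p : List ℕ) : Matrix (Fin n) (Fin n) F :=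
  fun i j => if (i : ℕ) = (j : ℕ) + 1 ∧ (j : ℕ) + 1 ∉ p.scanl (· + ·) 0 then 1 else 0

/- ------------------------------------------------------------------ -/
/- Auxiliary material for the proof.                                   -/

lemma scanl_ones (s : ℕ) : ∀ b a : ℕ,
    a ∈ (List.replicate s 1).scanl (· + ·) b ↔ b ≤ a ∧ a ≤ b + s := by
  induction s with
  | zero => intro b a; simp [List.scanl]; omega
  | succ s ih =>
    intro b a
    rw [List.replicate_succ, List.scanl_cons, List.mem_cons, ih]
    omega

lemma scanl_char (r s : ℕ) : ∀ b a : ℕ,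
    a ∈ ((List.replicate r 2 ++ List.replicate s 1).scanl (· + ·) b) ↔
      ((a % 2 = b % 2 ∧ b ≤ a ∧ a ≤ b + 2*r) ∨ (b + 2*r ≤ a ∧ a ≤ b + 2*r + s)) := by
  induction r with
  | zero => intro b a; simp [scanl_ones]; omega
  | succ r ih =>
    intro b a
    rw [List.replicate_succ, List.cons_append, List.scanl_cons, List.mem_cons, ih]
    omega

/-- The underlying permutation of indices (on `ℕ`). -/
def tauN (m r i : ℕ) : ℕ :=
  if i < 2*r then (if i % 2 = 0 then m - 1 - i/2 else m + i/2)
  else if i < m + r then i - 2*r else i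

lemma tauN_lt (n m r i : ℕ) (hmr : m + r ≤ n) (hi : i < n) :
    tauN m r i < n := by unfold tauN; split_ifs <;> omega

lemma tauN_inj (m r : ℕ) (h1 : 1 ≤ m) (hrm : r ≤ m) :
    ∀ a b : ℕ, tauN m r a = tauN m r b → a = b := by
  intro a b h; unfold tauN at h; split_ifs at h <;> omega

/-- The conjugating monomial matrix. -/
def gmat (F : Type*) [Field F] (n m r : ℕ) (e d : F) : Matrix (Fin n) (Fin n) F :=
  fun i j => if tauN m r (i : ℕ) = (j : ℕ) then
    (if (i:ℕ) = 2*r - 1 then d⁻¹ else if (i:ℕ) = 2*r then e*d else 1) else 0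

lemma yY_val (F : Type*) [Field F] (n m r : ℕ) (d : F) (a : ℕ) (ha : a < n) (j : Fin n) :
    yY F n m (Ymat F n m r d) ⟨a, ha⟩ j
      = if m ≤ a ∧ (j:ℕ) < m ∧ a - m < r ∧ (j:ℕ) + (a - m) + 1 = m then
          (if a - m = r - 1 then d else 1) else 0 := by
  simp only [yY, Ymat]
  split_ifs <;> first | rfl | omega

lemma key_eq (F : Type*) [Field F] (n m r : ℕ)
    (h1 : 1 ≤ m) (h2 : m ≤ n - 1)
    (hr1 : 1 ≤ r) (hrm : r ≤ m) (hrnm : r ≤ n - m) (hrn : 2 * r < n)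
    (e d : F) (hd : d ≠ 0) :
    gmat F n m r e d * yY F n m (Ymat F n m r d)
      = Jmat F n (List.replicate r 2 ++ List.replicate (n - 2 * r) 1) * gmat F n m r e d := by
  have hmn : m + r ≤ n := by omega
  have hdd : d⁻¹ * d = 1 := inv_mul_cancel₀ hd
  ext i j
  rw [Matrix.mul_apply, Matrix.mul_apply]
  have hiN := i.isLt
  have hjN := j.isLt
  have hτi : tauN m r (i:ℕ) < n := tauN_lt n m r i hmn i.isLt
  have hL : ∑ k, gmat F n m r e d i k * yY F n m (Ymat F n m r d) k j
      = (if (i:ℕ) = 2*r - 1 then d⁻¹ else if (i:ℕ) = 2*r then e*d else 1)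
        * yY F n m (Ymat F n m r d) ⟨tauN m r (i:ℕ), hτi⟩ j := by
    rw [Finset.sum_eq_single (⟨tauN m r (i:ℕ), hτi⟩ : Fin n)]
    · simp [gmat]
    · intro k _ hk
      have hne : tauN m r (i:ℕ) ≠ (k:ℕ) := fun h => hk (Fin.ext h.symm)
      simp only [gmat]
      rw [if_neg hne, zero_mul]
    · intro h; exact absurd (Finset.mem_univ _) h
  rw [hL, yY_val]
  rcases Nat.eq_zero_or_pos (i:ℕ) with hi0 | hi0
  · have hR : ∑ k, Jmat F n (List.replicate r 2 ++ List.replicate (n - 2 * r) 1) i k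
        * gmat F n m r e d k j = 0 := by
      apply Finset.sum_eq_zero
      intro k _
      simp only [Jmat]
      rw [if_neg (show ¬((i:ℕ) = (k:ℕ) + 1 ∧ (k:ℕ) + 1 ∉ _) from by omega), zero_mul]
    rw [hR,
      if_neg (show ¬(m ≤ tauN m r (i:ℕ) ∧ (j:ℕ) < m ∧ tauN m r (i:ℕ) - m < r
          ∧ (j:ℕ) + (tauN m r (i:ℕ) - m) + 1 = m) from by unfold tauN; split_ifs <;> omega),
      mul_zero]
  · have hk0 : (i:ℕ) - 1 < n := by omega
    have hR : ∑ k, Jmat F n (List.replicate r 2 ++ List.replicate (n - 2 * r) 1) i k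
        * gmat F n m r e d k j
        = Jmat F n (List.replicate r 2 ++ List.replicate (n - 2 * r) 1) i ⟨(i:ℕ)-1, hk0⟩
          * gmat F n m r e d ⟨(i:ℕ)-1, hk0⟩ j := by
      rw [Finset.sum_eq_single (⟨(i:ℕ)-1, hk0⟩ : Fin n)]
      · intro k _ hk
        simp only [Jmat]
        rw [if_neg (show ¬((i:ℕ) = (k:ℕ) + 1 ∧ (k:ℕ) + 1 ∉ _) from
          fun hcon => hk (Fin.ext (show (k:ℕ) = (i:ℕ) - 1 from by
            have := hcon.1; omega))), zero_mul]
      · intro h; exact absurd (Finset.mem_univ _) h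
    rw [hR]
    simp only [Jmat, gmat, scanl_char]
    by_cases hcase : (i:ℕ) % 2 = 1 ∧ (i:ℕ) < 2*r
    · have ha : tauN m r (i:ℕ) = m + (i:ℕ)/2 := by unfold tauN; split_ifs <;> omega
      have hb : tauN m r ((i:ℕ) - 1) = m - 1 - (i:ℕ)/2 := by
        unfold tauN; split_ifs <;> omega
      rw [ha, hb,
        if_pos (show (i:ℕ) = (i:ℕ) - 1 + 1 ∧
          ¬(((i:ℕ) - 1 + 1) % 2 = 0 % 2 ∧ 0 ≤ (i:ℕ) - 1 + 1 ∧ (i:ℕ) - 1 + 1 ≤ 0 + 2 * r ∨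
            0 + 2 * r ≤ (i:ℕ) - 1 + 1 ∧ (i:ℕ) - 1 + 1 ≤ 0 + 2 * r + (n - 2 * r))
          from by omega), one_mul]
      split_ifs <;> first | (exfalso; omega) | exact hdd | simp
    · rw [if_neg (show ¬((i:ℕ) = (i:ℕ) - 1 + 1 ∧
          ¬(((i:ℕ) - 1 + 1) % 2 = 0 % 2 ∧ 0 ≤ (i:ℕ) - 1 + 1 ∧ (i:ℕ) - 1 + 1 ≤ 0 + 2 * r ∨
            0 + 2 * r ≤ (i:ℕ) - 1 + 1 ∧ (i:ℕ) - 1 + 1 ≤ 0 + 2 * r + (n - 2 * r)))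
          from by omega), zero_mul,
        if_neg (show ¬(m ≤ tauN m r (i:ℕ) ∧ (j:ℕ) < m ∧ tauN m r (i:ℕ) - m < r
          ∧ (j:ℕ) + (tauN m r (i:ℕ) - m) + 1 = m) from by
            revert hcase; unfold tauN; split_ifs <;> omega),
        mul_zero]

/-- For `1 ≤ r ≤ min(m, n−m)` with `2r < n` and `d ∈ F^×`, the block matrix
`y(Y_r(d)) = [[0_m, 0],[Y_r(d), 0_{n−m}]]` is `SL_n(F)`-conjugate to the standard
nilpotent representative `J_{[2^r 1^{n−2r}]}` of the partition `[2^r 1^{n−2r}]`. -/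
theorem yY_conj_J (F : Type*) [Field F] (n m r : ℕ)
    (h1 : 1 ≤ m) (h2 : m ≤ n - 1)
    (hr1 : 1 ≤ r) (hrm : r ≤ m) (hrnm : r ≤ n - m) (hrn : 2 * r < n)
    (d : F) (hd : d ≠ 0) :
    ∃ g : Matrix.SpecialLinearGroup (Fin n) F,
      g.val * yY F n m (Ymat F n m r d) * (g⁻¹).val
        = Jmat F n (List.replicate r 2 ++ List.replicate (n - 2 * r) 1) := by
  have hmn : m + r ≤ n := by omega
  let τf : Fin n → Fin n := fun i => ⟨tauN m r i, tauN_lt n m r i hmn i.isLt⟩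
  have hinj : Function.Injective τf := fun a b hab =>
    Fin.ext (tauN_inj m r h1 hrm a b (congrArg Fin.val hab))
  let τ : Equiv.Perm (Fin n) := Equiv.ofBijective τf (Finite.injective_iff_bijective.mp hinj)
  set ε : F := ((Equiv.Perm.sign τ : ℤ) : F) with hεdef
  have hε1 : ε = 1 ∨ ε = -1 := by
    rcases Int.units_eq_one_or (Equiv.Perm.sign τ) with h | h <;> rw [hεdef, h] <;> norm_num
  have hεε : ε * ε = 1 := by rcases hε1 with h | h <;> rw [h] <;> ring
  let t : Fin n → F := fun i => if (i:ℕ) = 2*r - 1 then d⁻¹ else if (i:ℕ) = 2*r then ε*d else 1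
  have hτval : ∀ i : Fin n, ((τ i : Fin n) : ℕ) = tauN m r i := fun i => rfl
  have hgdp : gmat F n m r ε d = Matrix.diagonal t * (τ.permMatrix F) := by
    ext i j
    rw [Matrix.mul_apply]
    rw [Finset.sum_eq_single i]
    · have hperm : (τ.permMatrix F) i j = if τ i = j then 1 else 0 := by
        simp [Equiv.Perm.permMatrix, PEquiv.toMatrix, Equiv.toPEquiv]
      rw [hperm, Matrix.diagonal_apply_eq]
      simp only [gmat]
      by_cases hc : tauN m r (i:ℕ) = (j:ℕ)
      · rw [if_pos hc, if_pos (Fin.ext (by rw [hτval]; exact hc)), mul_one]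
      · rw [if_neg hc, if_neg (fun h => hc (by rw [← hτval i, h])), mul_zero]
    · intro k _ hk
      rw [Matrix.diagonal_apply_ne' _ hk, zero_mul]
    · intro h; exact absurd (Finset.mem_univ _) h
  have hprod : ∏ i, t i = d⁻¹ * (ε * d) := by
    have h12 : (⟨2*r-1, by omega⟩ : Fin n) ≠ ⟨2*r, by omega⟩ := by
      intro h
      have := congrArg Fin.val h
      simp only at this
      omega
    rw [← Finset.prod_subset
      (Finset.subset_univ ({⟨2*r-1, by omega⟩, ⟨2*r, by omega⟩} : Finset (Fin n)))]
    · rw [Finset.prod_pair h12]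
      simp only [t]
      rw [if_pos trivial, if_neg (show ¬(2*r : ℕ) = 2*r-1 by omega), if_pos trivial]
    · intro x _ hx
      simp only [Finset.mem_insert, Finset.mem_singleton] at hx
      push_neg at hx
      simp only [t]
      rw [if_neg, if_neg]
      · intro h; exact hx.2 (Fin.ext (by simpa using h))
      · intro h; exact hx.1 (Fin.ext (by simpa using h))
  have hdet : (gmat F n m r ε d).det = 1 := by
    rw [hgdp, Matrix.det_mul, Matrix.det_diagonal, Matrix.det_permutation, hprod]
    have hc : d⁻¹ * (ε * d) * ((Equiv.Perm.sign τ : ℤ) : F) = (d⁻¹ * d) * (ε * ε) := by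
      rw [← hεdef]; ring
    rw [hc, inv_mul_cancel₀ hd, one_mul, hεε]
  let G : Matrix.SpecialLinearGroup (Fin n) F := ⟨gmat F n m r ε d, hdet⟩
  refine ⟨G, ?_⟩
  have hGG : G.val * (G⁻¹).val = 1 := by
    rw [← Matrix.SpecialLinearGroup.coe_mul, mul_inv_cancel, Matrix.SpecialLinearGroup.coe_one]
  have hkey' : G.val * yY F n m (Ymat F n m r d)
      = Jmat F n (List.replicate r 2 ++ List.replicate (n - 2 * r) 1) * G.val :=
    key_eq F n m r h1 h2 hr1 hrm hrnm hrn ε d hd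
  rw [hkey', mul_assoc, hGG, mul_one]
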